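/- The Szendrei expansion Sz(T) of an li-constellation T is generated by the image ι(T) of the canonical map ι(x) = ({x⁺,x},x) under composition, the unary operation +, and corestriction: every (A,a) ∈ Sz(T) can be written as (ι(a₁)⁺|⋯|ι(aₙ)⁺)ι(a) where A = {a⁺, a₁, …, aₙ}. -/

import Mathlib

/-- A "pre-constellation": carrier with definedness predicate `D`, partial
multiplication `mul`, unary `plus`, a partial order `le`, a restriction
operation `res` (so `res e x` is `e|x`), a corestriction-existence predicate
`coE` and corestriction operation `cor` (so `cor x e` is `x|e`). -/
structure PreConst (T : Type*) where
  D : T → T → Prop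
  mul : T → T → T
  plus : T → T
  le : T → T → Prop
  res : T → T → T
  coE : T → T → Prop
  cor : T → T → T

/-- `e ∈ T⁺`. -/
def PreConst.isPlus {T : Type*} (P : PreConst T) (e : T) : Prop := ∃ x, e = P.plus x

/-- Two elements are in the same connected component of the poset `(T⁺, ≤)`. -/
def PreConst.connected {T : Type*} (P : PreConst T) : T → T → Prop :=
  Relation.ReflTransGen (fun a b => P.isPlus a ∧ P.isPlus b ∧ (P.le a b ∨ P.le b a))

/-- The pseudo-product `x ⊗ y = (x|y⁺)y`. -/
def PreConst.pprod {T : Type*} (P : PreConst T) (x y : T) : T :=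
  P.mul (P.cor x (P.plus y)) y

/-- `P` is a left constellation (axioms (c1)-(c4)). -/
structure IsConst {T : Type*} (P : PreConst T) : Prop where
  c1 : ∀ x y z, (P.D x y ∧ P.D y z) ↔ (P.D y z ∧ P.D x (P.mul y z))
  c2 : ∀ x y z, P.D x y → P.D y z →
    P.D (P.mul x y) z ∧ P.mul x (P.mul y z) = P.mul (P.mul x y) z
  c3 : ∀ e x, P.isPlus e → ((P.D e x ∧ P.mul e x = x) ↔ e = P.plus x)
  c4 : ∀ e x, P.isPlus e → P.D x e → P.mul x e = x

/-- `P` is a locally inductive left constellation (li-constellation):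
a left constellation with a partial order satisfying (wo1)-(wo9). -/
structure IsLiC {T : Type*} (P : PreConst T) extends IsConst P : Prop where
  le_refl : ∀ x, P.le x x
  le_trans : ∀ x y z, P.le x y → P.le y z → P.le x z
  le_antisymm : ∀ x y, P.le x y → P.le y x → x = y
  wo1 : ∀ x y x' y', P.le x y → P.le x' y' → P.D x x' → P.D y y' →
    P.le (P.mul x x') (P.mul y y')
  wo2 : ∀ x y, P.le x y → P.le (P.plus x) (P.plus y)
  wo3 : ∀ e x, P.isPlus e → P.le e (P.plus x) →
    P.le (P.res e x) x ∧ P.plus (P.res e x) = e ∧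
      ∀ r, P.le r x → P.plus r = e → r = P.res e x
  wo4 : ∀ x e, P.isPlus e →
    (P.coE x e ↔ ∃ y, P.le y x ∧ P.D y e) ∧
    (P.coE x e → P.le (P.cor x e) x ∧ P.D (P.cor x e) e ∧
      ∀ y, P.le y x → P.D y e → P.le y (P.cor x e))
  wo5 : ∀ x y e, P.isPlus e → P.D x y → (P.coE (P.mul x y) e ↔ P.coE y e)
  wo6 : ∀ x e f, P.isPlus e → P.isPlus f → P.le f e → (P.coE x e ↔ P.coE x f)
  wo7 : ∀ x y e, P.isPlus e → P.D x y → P.coE (P.mul x y) e →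
    P.plus (P.cor (P.mul x y) e) = P.plus (P.cor x (P.plus (P.cor y e)))
  wo8 : ∀ e f, P.isPlus e → P.isPlus f → P.le e f →
    P.coE e f ∧ P.cor e f = P.res e f
  wo9a : ∀ e f, P.isPlus e → P.isPlus f → P.connected e f → P.coE e f
  wo9b : ∀ e f, P.isPlus e → P.isPlus f → P.coE e f →
    P.isPlus (P.cor e f) ∧ P.le (P.cor e f) e ∧ P.le (P.cor e f) f ∧
      ∀ g, P.isPlus g → P.le g e → P.le g f → P.le g (P.cor e f)

/-- The Szendrei expansion of an li-constellation, realized on `Finset T × T`: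
an element `(A, a)` (meaningful when `a ∈ A`, `a⁺ ∈ A` and `b⁺ = a⁺`
for all `b ∈ A`) with operation `(A,a)(B,b) = (A, ab)` when `ab` is defined,
`(A,a)⁺ = (A, a⁺)`, order `(A,a) ≤ (B,b)` iff `a ≤ b` and `a⁺B ⊆ A`,
restriction `(E,e)|(A,a) = (E, e|a)`, and corestriction
`(A,a)|(E,e) = ((a|e)⁺A ∪ (a|e)E, a|e)` (existing iff `a|e` exists). -/
def SzC {T : Type*} [DecidableEq T] (P : PreConst T) : PreConst (Finset T × T) where
  D p q := P.D p.2 q.2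
  mul p q := (p.1, P.mul p.2 q.2)
  plus p := (p.1, P.plus p.2)
  le p q := P.le p.2 q.2 ∧ q.1.image (fun b => P.mul (P.plus p.2) b) ⊆ p.1
  res p q := (p.1, P.res p.2 q.2)
  coE p q := P.coE p.2 q.2
  cor p q := (p.1.image (fun b => P.mul (P.plus (P.cor p.2 q.2)) b) ∪
              q.1.image (fun b => P.mul (P.cor p.2 q.2) b), P.cor p.2 q.2)

/-- The canonical map `ι : T → Sz(T)`, `ι(x) = ({x⁺, x}, x)`. -/
def iotaSz {T : Type*} [DecidableEq T] (P : PreConst T) (x : T) : Finset T × T :=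
  ({P.plus x, x}, x)

/-- The Szendrei expansion `Sz(T)` is generated by `ι(T)` under composition, `+`
and corestriction: every `(A, a) ∈ Sz(T)` can be written as
`(ι(a₁)⁺|⋯|ι(aₙ)⁺)ι(a)` where `A = {a⁺, a₁, …, aₙ}`. -/
theorem stmt17 {T : Type*} [DecidableEq T] (P : PreConst T) (h : IsLiC P)
    (A : Finset T) (a : T) (ha : a ∈ A) (hpa : P.plus a ∈ A)
    (hall : ∀ b ∈ A, P.plus b = P.plus a) :
    ∃ (c : T) (l : List T), insert (P.plus a) (c :: l).toFinset = A ∧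
      (A, a) = (SzC P).mul
        (List.foldl (fun acc b => (SzC P).cor acc ((SzC P).plus (iotaSz P b)))
          ((SzC P).plus (iotaSz P c)) l)
        (iotaSz P a) := by

  classical
  set e := P.plus a with he
  have hep : P.isPlus e := ⟨a, rfl⟩
  have hfix : ∀ b ∈ A, P.D e b ∧ P.mul e b = b := by
    intro b hb
    exact (h.c3 e b hep).mpr (hall b hb).symm
  have hDe : P.D e a ∧ P.mul e a = a := hfix a ha
  have hDee : P.D e e :=
    ((h.c1 e e a).mpr ⟨hDe.1, by rw [hDe.2]; exact hDe.1⟩).1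
  have hmulee : P.mul e e = e := h.c4 e e hep hDee
  have pe : P.plus e = e := ((h.c3 e e hep).mp ⟨hDee, hmulee⟩).symm
  have hresee : P.res e e = e := by
    have h3 := h.wo3 e e hep (by rw [pe]; exact h.le_refl e)
    exact (h3.2.2 e (h.le_refl e) pe).symm
  have hcoree : P.cor e e = e := by
    rw [(h.wo8 e e hep hep (h.le_refl e)).2, hresee]
  have heA : e ∈ A := hpa
  have himg : ∀ S : Finset T, S ⊆ A → S.image (fun x => P.mul e x) = S := by
    intro S hS
    have h1 : Set.EqOn (fun x => P.mul e x) id (S : Set T) := by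
      intro x hx; exact (hfix x (hS hx)).2
    rw [Finset.image_congr h1, Finset.image_id]
  have key : ∀ (l : List T) (S : Finset T), (∀ b ∈ l, b ∈ A) → S ⊆ A → e ∈ S →
      List.foldl (fun acc b => (SzC P).cor acc ((SzC P).plus (iotaSz P b))) (S, e) l
        = (S ∪ l.toFinset, e) := by
    intro l
    induction l with
    | nil => intro S _ _ _; simp
    | cons b t ih =>
      intro S hl hS heS
      have hbA : b ∈ A := hl b List.mem_cons_self
      have hsub : ({P.plus b, b} : Finset T) ⊆ A := by
        intro x hx
        rcases Finset.mem_insert.mp hx with rfl | hx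
        · rw [hall b hbA]; exact heA
        · rw [Finset.mem_singleton.mp hx]; exact hbA
      have step : (SzC P).cor (S, e) ((SzC P).plus (iotaSz P b)) = (insert b S, e) := by
        have hpb : P.plus b = e := hall b hbA
        simp only [SzC, iotaSz, hpb, hcoree, pe]
        congr 1
        rw [himg S hS, himg {e, b} (by rw [← hpb]; simpa [hpb] using hsub)]
        ext x
        simp only [Finset.mem_union, Finset.mem_insert, Finset.mem_singleton]
        constructor
        · rintro (hx | rfl | rfl)
          · exact Or.inr hx
          · exact Or.inr heS
          · exact Or.inl rfl
        · rintro (rfl | hx)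
          · exact Or.inr (Or.inr rfl)
          · exact Or.inl hx
      rw [List.foldl_cons, step,
        ih (insert b S) (fun x hx => hl x (List.mem_cons_of_mem b hx))
          (Finset.insert_subset hbA hS) (Finset.mem_insert_of_mem heS)]
      congr 1
      ext x
      simp only [Finset.mem_union, Finset.mem_insert, List.toFinset_cons, List.mem_toFinset]
      tauto
  refine ⟨a, A.toList, ?_, ?_⟩
  · rw [List.toFinset_cons, Finset.toList_toFinset, Finset.insert_eq_self.mpr ha,
      Finset.insert_eq_self.mpr hpa]
  · have hinit : (SzC P).plus (iotaSz P a) = (({e, a} : Finset T), e) := by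
      simp [SzC, iotaSz, he]
    rw [hinit, key A.toList {e, a} (fun x hx => Finset.mem_toList.mp hx)
      (by intro x hx; rcases Finset.mem_insert.mp hx with rfl | hx
          · exact heA
          · rw [Finset.mem_singleton.mp hx]; exact ha)
      (Finset.mem_insert_self e _)]
    have hAu : ({e, a} : Finset T) ∪ A.toList.toFinset = A := by
      rw [Finset.toList_toFinset]
      apply Finset.union_eq_right.mpr
      intro x hx
      rcases Finset.mem_insert.mp hx with rfl | hx
      · exact heA
      · rw [Finset.mem_singleton.mp hx]; exact ha
    rw [hAu]
    simp [SzC, iotaSz, hDe.2]
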